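/- Let k be a field, n ≥ 1, and let X be an n×n matrix over k whose minimal polynomial has degree n. Then every n×n matrix Y over k with X*Y = Y*X is a polynomial in X, i.e. Y = q(X) for some polynomial q ∈ k[T]. Consequently the commutant {Y ∈ M_n(k) : X*Y = Y*X} is a commutative k-subalgebra of M_n(k) of dimension n. -/

import Mathlib

open Polynomial Module

universe u

/-- If `f` is an endomorphism of a finite-dimensional space with nonzero minimal polynomial,
there is a vector whose annihilator ideal is generated by the minimal polynomial. -/
theorem aux_exists_cyclic {k : Type u} [Field k] {V : Type u} [AddCommGroup V] [Module k V]
    [FiniteDimensional k V] (f : Module.End k V) (hf : minpoly k f ≠ 0) :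
    ∃ v : V, ∀ p : k[X], (Polynomial.aeval f p) v = 0 → minpoly k f ∣ p := by
  classical
  have hTor : Module.IsTorsion k[X] (Module.AEval' f) := by
    intro x
    refine ⟨⟨minpoly k f, mem_nonZeroDivisors_of_ne_zero hf⟩, ?_⟩
    show (minpoly k f) • x = 0
    have : (minpoly k f) • x =
        Module.AEval'.of f ((Polynomial.aeval f (minpoly k f)) ((Module.AEval'.of f).symm x)) := by
      conv_lhs => rw [← (Module.AEval'.of f).apply_symm_apply x]
      exact (Module.AEval.of_aeval_smul f (minpoly k f) ((Module.AEval'.of f).symm x)).symm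
    rw [this, minpoly.aeval]
    simp
  obtain ⟨ι, hι, p, hp, e, ⟨E⟩⟩ := Module.equiv_directSum_of_isTorsion (R := k[X])
    (M := Module.AEval' f) hTor
  haveI := hι
  set q : ι → k[X] := fun i => p i ^ e i with hq
  let ones : DirectSum ι (fun i => k[X] ⧸ (k[X] ∙ q i)) := DFinsupp.equivFunOnFintype.symm
    (fun i => Submodule.Quotient.mk 1)
  let v : V := (Module.AEval'.of f).symm (E.symm ones)
  refine ⟨v, fun P hP => ?_⟩
  have hsmul : ∀ (P : k[X]) (w : V), P • (Module.AEval'.of f w)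
      = Module.AEval'.of f ((Polynomial.aeval f P) w) :=
    fun P w => (Module.AEval.of_aeval_smul f P w).symm
  -- P annihilates v, hence each component
  have h1 : P • ones = 0 := by
    have : P • (E.symm ones) = 0 := by
      have hv : Module.AEval'.of f v = E.symm ones := by
        simp [v]
      rw [← hv, hsmul, hP]
      simp
    have := congrArg E (this)
    rwa [map_smul, E.apply_symm_apply, map_zero] at this
  have hdvd : ∀ i, q i ∣ P := by
    intro i
    have h2 : (P • ones) i = 0 := by rw [h1]; rfl
    have h3 : ones i = Submodule.Quotient.mk 1 := by
      exact congrFun (DFinsupp.equivFunOnFintype.apply_symm_apply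
        (fun i => (Submodule.Quotient.mk 1 : k[X] ⧸ (k[X] ∙ q i)))) i
    rw [DFinsupp.smul_apply, h3] at h2
    rw [← Submodule.Quotient.mk_smul, smul_eq_mul, mul_one] at h2
    rw [Submodule.Quotient.mk_eq_zero, Submodule.mem_span_singleton] at h2
    obtain ⟨a, ha⟩ := h2
    exact ⟨a, by rw [← ha, smul_eq_mul, mul_comm]⟩
  -- hence P annihilates everything
  have hann : Polynomial.aeval f P = 0 := by
    ext w
    have hy : ∀ y : DirectSum ι (fun i => k[X] ⧸ (k[X] ∙ q i)), P • y = 0 := by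
      intro y
      refine DFinsupp.ext fun i => ?_
      rw [DFinsupp.zero_apply, DFinsupp.smul_apply]
      obtain ⟨r, hr⟩ := Submodule.Quotient.mk_surjective _ (y i)
      rw [← hr, ← Submodule.Quotient.mk_smul, smul_eq_mul]
      rw [Submodule.Quotient.mk_eq_zero, Submodule.mem_span_singleton]
      obtain ⟨c, hc⟩ := hdvd i
      exact ⟨c * r, by rw [smul_eq_mul, hc]; ring⟩
    have : P • (Module.AEval'.of f w) = 0 := by
      have := hy (E (Module.AEval'.of f w))
      have := congrArg E.symm this
      rwa [map_smul, E.symm_apply_apply, map_zero] at this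
    rw [hsmul] at this
    simpa using ((Module.AEval'.of f).injective (by simpa using this))
  exact minpoly.dvd k f hann

/-- If the minimal polynomial of an `n × n` matrix `X` has degree `n`, then every matrix
commuting with `X` is a polynomial in `X`, and the commutant of `X` is a commutative
subalgebra of `M_n(k)` of dimension `n`. -/
theorem commutant_of_minpoly_natDegree_eq
    (k : Type*) [Field k] (n : ℕ) (hn : 1 ≤ n)
    (X : Matrix (Fin n) (Fin n) k) (hmin : (minpoly k X).natDegree = n) :
    (∀ Y : Matrix (Fin n) (Fin n) k, X * Y = Y * X →
      ∃ q : Polynomial k, Y = Polynomial.aeval X q) ∧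
    (∀ Y ∈ Subalgebra.centralizer k ({X} : Set (Matrix (Fin n) (Fin n) k)),
      ∀ Z ∈ Subalgebra.centralizer k ({X} : Set (Matrix (Fin n) (Fin n) k)), Y * Z = Z * Y) ∧
    Module.finrank k (Subalgebra.centralizer k ({X} : Set (Matrix (Fin n) (Fin n) k))) = n := by
  classical
  have hm0 : minpoly k X ≠ 0 := by
    intro h
    rw [h, Polynomial.natDegree_zero] at hmin
    omega
  set g := Matrix.toLinAlgEquiv' (R := k) (n := Fin n) with hg
  set f : Module.End k (Fin n → k) := g X with hfdef
  have hmf : minpoly k f = minpoly k X := minpoly.algEquiv_eq g X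
  have hf0 : minpoly k f ≠ 0 := by rw [hmf]; exact hm0
  obtain ⟨v, hv⟩ := aux_exists_cyclic f hf0
  -- a generic evaluation computation
  have haev : ∀ (c : Fin n → k) (w : Fin n → k),
      (Polynomial.aeval f (∑ i : Fin n, Polynomial.C (c i) * Polynomial.X ^ (i : ℕ))) w
        = ∑ i : Fin n, c i • (f ^ (i : ℕ)) w := by
    intro c w
    rw [map_sum, LinearMap.sum_apply]
    refine Finset.sum_congr rfl fun i _ => ?_
    rw [map_mul, Polynomial.aeval_C, Polynomial.aeval_X_pow, Module.End.mul_apply,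
      Module.algebraMap_end_apply]
  -- linear independence of v, f v, ..., f^(n-1) v
  have li : LinearIndependent k (fun i : Fin n => (f ^ (i : ℕ)) v) := by
    rw [Fintype.linearIndependent_iff]
    intro c hc
    set P : Polynomial k := ∑ i : Fin n, Polynomial.C (c i) * Polynomial.X ^ (i : ℕ) with hPdef
    have hPev : (Polynomial.aeval f P) v = 0 := by rw [hPdef, haev, hc]
    have hdvd : minpoly k X ∣ P := by rw [← hmf]; exact hv P hPev
    have hP0 : P = 0 := by
      by_contra h0
      have hdeg : P.degree < (n : ℕ) := by
        rw [hPdef]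
        refine lt_of_le_of_lt (Polynomial.degree_sum_le _ _) ?_
        rw [Finset.sup_lt_iff (by exact_mod_cast WithBot.bot_lt_coe n)]
        intro i _
        refine lt_of_le_of_lt (Polynomial.degree_C_mul_X_pow_le _ _) ?_
        exact_mod_cast i.isLt
      have := Polynomial.degree_le_of_dvd hdvd h0
      rw [Polynomial.degree_eq_natDegree hm0, hmin] at this
      exact absurd (lt_of_le_of_lt this hdeg) (lt_irrefl _)
    intro i
    have hcoeff : P.coeff (i : ℕ) = c i := by
      rw [hPdef, Polynomial.finset_sum_coeff]
      rw [Finset.sum_eq_single i]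
      · simp
      · intro j _ hj
        rw [Polynomial.coeff_C_mul, Polynomial.coeff_X_pow,
          if_neg (fun h => hj (Fin.val_injective h.symm)), mul_zero]
      · intro h; exact absurd (Finset.mem_univ i) h
    rw [hP0, Polynomial.coeff_zero] at hcoeff
    exact hcoeff.symm
  have hcard : Fintype.card (Fin n) = Module.finrank k (Fin n → k) := by
    rw [Fintype.card_fin, Module.finrank_fin_fun]
  haveI : Nonempty (Fin n) := ⟨⟨0, hn⟩⟩
  set b : Basis (Fin n) k (Fin n → k) := basisOfLinearIndependentOfCardEqFinrank li hcard with hbdef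
  have hb : ∀ i : Fin n, b i = (f ^ (i : ℕ)) v := fun i => by
    rw [hbdef, coe_basisOfLinearIndependentOfCardEqFinrank]
  -- Part 1
  have key : ∀ Y : Matrix (Fin n) (Fin n) k, X * Y = Y * X →
      ∃ q : Polynomial k, Y = Polynomial.aeval X q := by
    intro Y hY
    set L : Module.End k (Fin n → k) := g Y with hLdef
    have hLf : Commute f L := by
      show f * L = L * f
      rw [hfdef, hLdef, ← map_mul, ← map_mul, hY]
    set c : Fin n → k := fun i => b.repr (L v) i with hcdef
    set q : Polynomial k := ∑ i : Fin n, Polynomial.C (c i) * Polynomial.X ^ (i : ℕ) with hqdef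
    have hqv : (Polynomial.aeval f q) v = L v := by
      rw [hqdef, haev]
      have := b.sum_repr (L v)
      calc ∑ i : Fin n, c i • (f ^ (i : ℕ)) v = ∑ i : Fin n, b.repr (L v) i • b i := by
            refine Finset.sum_congr rfl fun i _ => ?_
            rw [hb i, hcdef]
        _ = L v := b.sum_repr (L v)
    have hgoal : L = Polynomial.aeval f q := by
      refine b.ext fun i => ?_
      rw [hb i]
      have h1 : L ((f ^ (i : ℕ)) v) = (f ^ (i : ℕ)) (L v) := by
        rw [← Module.End.mul_apply, ← Module.End.mul_apply, ((hLf.pow_left (i : ℕ)).eq)]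
      have h2 : Commute (f ^ (i : ℕ)) (Polynomial.aeval f q) := by
        have h3 : f ^ (i : ℕ) = Polynomial.aeval f ((Polynomial.X : Polynomial k) ^ (i : ℕ)) :=
          (Polynomial.aeval_X_pow (n := (i : ℕ)) f).symm
        show _ = _
        rw [h3, ← map_mul, ← map_mul, mul_comm]
      rw [h1, hqv.symm]
      rw [← Module.End.mul_apply, ← Module.End.mul_apply, h2.eq]
    refine ⟨q, ?_⟩
    apply g.injective
    rw [← hLdef, hgoal]
    exact Polynomial.aeval_algHom_apply g.toAlgHom X q
  -- membership of powers in the centralizer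
  have hXmem : ∀ i : ℕ, X ^ i ∈ Subalgebra.centralizer k ({X} : Set (Matrix (Fin n) (Fin n) k)) := by
    intro i
    rw [Subalgebra.mem_centralizer_iff]
    rintro y hy
    rw [Set.mem_singleton_iff] at hy
    rw [hy]
    exact ((Commute.refl X).pow_right i).eq
  have hInt : IsIntegral k X := minpoly.ne_zero_iff.mp hm0
  have hmonic : (minpoly k X).Monic := minpoly.monic hInt
  -- centralizer as a span
  have hspan : Subalgebra.toSubmodule (Subalgebra.centralizer k ({X} : Set (Matrix (Fin n) (Fin n) k)))
      = Submodule.span k (Set.range fun i : Fin n => X ^ (i : ℕ)) := by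
    refine le_antisymm ?_ ?_
    · intro Y hY
      rw [Subalgebra.mem_toSubmodule, Subalgebra.mem_centralizer_iff] at hY
      have hcomm : X * Y = Y * X := hY X (Set.mem_singleton X)
      obtain ⟨q, rfl⟩ := key Y hcomm
      rw [PowerBasis.mem_span_pow']
      refine ⟨q %ₘ (minpoly k X), ?_, ?_⟩
      · have := Polynomial.degree_modByMonic_lt q hmonic
        rwa [Polynomial.degree_eq_natDegree hm0, hmin] at this
      · conv_lhs => rw [← Polynomial.modByMonic_add_div q (minpoly k X)]
        rw [map_add, map_mul, minpoly.aeval, zero_mul, add_zero]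
    · rw [Submodule.span_le]
      rintro _ ⟨i, rfl⟩
      rw [SetLike.mem_coe, Subalgebra.mem_toSubmodule]
      exact hXmem (i : ℕ)
  refine ⟨key, ?_, ?_⟩
  · intro Y hY Z hZ
    rw [Subalgebra.mem_centralizer_iff] at hY hZ
    obtain ⟨q, rfl⟩ := key Y (hY X (Set.mem_singleton X))
    obtain ⟨r, rfl⟩ := key Z (hZ X (Set.mem_singleton X))
    rw [← map_mul, ← map_mul, mul_comm]
  · have li2 : LinearIndependent k (fun i : Fin n => X ^ (i : ℕ)) := by
      have := linearIndependent_pow (K := k) X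
      rwa [hmin] at this
    have h1 : Module.finrank k (Subalgebra.toSubmodule
        (Subalgebra.centralizer k ({X} : Set (Matrix (Fin n) (Fin n) k)))) = n := by
      rw [hspan, finrank_span_eq_card li2, Fintype.card_fin]
    exact h1
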